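/- Let E be a nonempty set and ℰ a nonempty collection of subsets of E that is closed under finite unions and finite intersections. If A ∈ S(ℰ) is produced by the Souslin operation from some Souslin scheme with values in ℰ, then A is also produced by the Souslin operation from a monotone Souslin scheme with values in ℰ. -/

import Mathlib

open Set


/-- A Souslin scheme with values in `ℰ ∪ {E}`: `A k s` is the set indexed by the
finite sequence `(s 0, …, s k)` of length `k+1`. -/
def IsSouslinScheme {E : Type*} (ℰ : Set (Set E)) (A : (k : ℕ) → (Fin (k + 1) → ℕ) → Set E) :
    Prop :=
  ∀ k s, A k s ∈ ℰ ∨ A k s = Set.univ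

/-- The set produced by the Souslin operation: `⋃_{n ∈ ℕ^ℕ} ⋂_k A_{n₁,…,n_k}`. -/
def souslinSet {E : Type*} (A : (k : ℕ) → (Fin (k + 1) → ℕ) → Set E) : Set E :=
  ⋃ f : ℕ → ℕ, ⋂ k : ℕ, A k fun i => f i

/-- The Souslin class `S(ℰ)`. -/
def SouslinClass {E : Type*} (ℰ : Set (Set E)) : Set (Set E) :=
  {S | ∃ A, IsSouslinScheme ℰ A ∧ S = souslinSet A}

/-- A Souslin scheme is monotone if it is vertically and horizontally monotone. -/
def IsMonotoneScheme {E : Type*} (A : (k : ℕ) → (Fin (k + 1) → ℕ) → Set E) : Prop :=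
  (∀ (k : ℕ) (s : Fin (k + 2) → ℕ), A (k + 1) s ⊆ A k fun i => s i.castSucc) ∧
  (∀ (k : ℕ) (s t : Fin (k + 1) → ℕ), (∀ i, s i ≤ t i) → A k s ⊆ A k t)

section Aux

variable {E : Type*} {ℰ : Set (Set E)}

lemma pairInterAux (hInter : ∀ a ∈ ℰ, ∀ b ∈ ℰ, a ∩ b ∈ ℰ) {a b : Set E}
    (ha : a ∈ ℰ ∨ a = univ) (hb : b ∈ ℰ ∨ b = univ) : a ∩ b ∈ ℰ ∨ a ∩ b = univ := by
  rcases ha with ha | ha <;> rcases hb with hb | hb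
  · exact Or.inl (hInter _ ha _ hb)
  · rw [hb, inter_univ]; exact Or.inl ha
  · rw [ha, univ_inter]; exact Or.inl hb
  · rw [ha, hb, inter_univ]; exact Or.inr rfl

lemma pairUnionAux (hUnion : ∀ a ∈ ℰ, ∀ b ∈ ℰ, a ∪ b ∈ ℰ) {a b : Set E}
    (ha : a ∈ ℰ ∨ a = univ) (hb : b ∈ ℰ ∨ b = univ) : a ∪ b ∈ ℰ ∨ a ∪ b = univ := by
  rcases ha with ha | ha <;> rcases hb with hb | hb
  · exact Or.inl (hUnion _ ha _ hb)
  · rw [hb, union_univ]; exact Or.inr rfl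
  · rw [ha, univ_union]; exact Or.inr rfl
  · rw [ha, hb, union_univ]; exact Or.inr rfl

lemma finsetInterAux (hInter : ∀ a ∈ ℰ, ∀ b ∈ ℰ, a ∩ b ∈ ℰ) {ι : Type*} (F : Finset ι)
    (g : ι → Set E) (hg : ∀ i ∈ F, g i ∈ ℰ ∨ g i = univ) :
    (⋂ i ∈ F, g i) ∈ ℰ ∨ (⋂ i ∈ F, g i) = univ := by
  classical
  induction F using Finset.induction_on with
  | empty => right; simp
  | @insert a F ha ih =>
    rw [Finset.set_biInter_insert]
    exact pairInterAux hInter (hg _ (Finset.mem_insert_self _ _))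
      (ih fun i hi => hg i (Finset.mem_insert_of_mem hi))

lemma finsetUnionAux (hUnion : ∀ a ∈ ℰ, ∀ b ∈ ℰ, a ∪ b ∈ ℰ) {ι : Type*} (F : Finset ι)
    (g : ι → Set E) (hne : F.Nonempty) (hg : ∀ i ∈ F, g i ∈ ℰ ∨ g i = univ) :
    (⋃ i ∈ F, g i) ∈ ℰ ∨ (⋃ i ∈ F, g i) = univ := by
  classical
  induction F using Finset.induction_on with
  | empty => exact absurd hne (by simp)
  | @insert a F ha ih =>
    rw [Finset.set_biUnion_insert]
    rcases F.eq_empty_or_nonempty with rfl | hne'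
    · have h0 : (⋃ i ∈ (∅ : Finset ι), g i) = (∅ : Set E) := by simp
      rw [h0, union_empty]
      exact hg _ (Finset.mem_insert_self _ _)
    · exact pairUnionAux hUnion (hg _ (Finset.mem_insert_self _ _))
        (ih hne' fun i hi => hg i (Finset.mem_insert_of_mem hi))

/-- Vertical monotonization: intersection of the initial segments. -/
def Bsch (A : (k : ℕ) → (Fin (k + 1) → ℕ) → Set E) (k : ℕ) (s : Fin (k + 1) → ℕ) : Set E :=
  ⋂ j : Fin (k + 1), A j.1 fun i => s (Fin.castLE j.isLt i)

/-- Horizontal monotonization: union over smaller indices. -/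
def Dsch (A : (k : ℕ) → (Fin (k + 1) → ℕ) → Set E) (k : ℕ) (s : Fin (k + 1) → ℕ) : Set E :=
  ⋃ t ∈ {t : Fin (k + 1) → ℕ | ∀ i, t i ≤ s i}, Bsch A k t

lemma mem_Dsch {A : (k : ℕ) → (Fin (k + 1) → ℕ) → Set E} {k : ℕ} {s : Fin (k + 1) → ℕ}
    {x : E} : x ∈ Dsch A k s ↔ ∃ t, (∀ i, t i ≤ s i) ∧ x ∈ Bsch A k t := by
  simp [Dsch]

lemma Bsch_vert {A : (k : ℕ) → (Fin (k + 1) → ℕ) → Set E} (k : ℕ) (s : Fin (k + 2) → ℕ) :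
    Bsch A (k + 1) s ⊆ Bsch A k fun i => s i.castSucc := by
  intro x hx
  simp only [Bsch, mem_iInter] at hx ⊢
  intro j
  exact hx ⟨j.1, by omega⟩

end Aux

/-- if `ℰ` is closed under finite unions and intersections, every set
produced by a Souslin scheme with values in `ℰ` is produced by a monotone such scheme. -/
theorem exists_monotone_souslinScheme {E : Type*} (ℰ : Set (Set E)) (hE : Nonempty E)
    (hℰ : ℰ.Nonempty)
    (hUnion : ∀ a ∈ ℰ, ∀ b ∈ ℰ, a ∪ b ∈ ℰ)
    (hInter : ∀ a ∈ ℰ, ∀ b ∈ ℰ, a ∩ b ∈ ℰ)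
    (A : (k : ℕ) → (Fin (k + 1) → ℕ) → Set E) (hA : IsSouslinScheme ℰ A) :
    ∃ D : (k : ℕ) → (Fin (k + 1) → ℕ) → Set E,
      IsSouslinScheme ℰ D ∧ IsMonotoneScheme D ∧ souslinSet D = souslinSet A := by
  refine ⟨Dsch A, ?_, ⟨?_, ?_⟩, ?_⟩
  · -- scheme property
    intro k s
    have hfin : {t : Fin (k + 1) → ℕ | ∀ i, t i ≤ s i}.Finite := by
      apply Set.Finite.subset (Set.Finite.pi (fun i => Set.finite_Iic (s i)))
      intro t ht
      exact fun i _ => ht i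
    have heq : Dsch A k s = ⋃ t ∈ hfin.toFinset, Bsch A k t := by
      ext x; simp [Dsch, Set.Finite.mem_toFinset]
    rw [heq]
    apply finsetUnionAux hUnion
    · exact ⟨s, by simp [Set.Finite.mem_toFinset]⟩
    · intro t _
      have hB : Bsch A k t
          = ⋂ j ∈ (Finset.univ : Finset (Fin (k + 1))), A j.1 fun i => t (Fin.castLE j.isLt i) := by
        simp [Bsch]
      rw [hB]
      exact finsetInterAux hInter _ _ fun j _ => hA _ _
  · -- vertical monotonicity
    intro k s x hx
    obtain ⟨t, ht, hxt⟩ := mem_Dsch.mp hx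
    exact mem_Dsch.mpr ⟨fun i => t i.castSucc, fun i => ht i.castSucc, Bsch_vert k t hxt⟩
  · -- horizontal monotonicity
    intro k s s' hss x hx
    obtain ⟨t, ht, hxt⟩ := mem_Dsch.mp hx
    exact mem_Dsch.mpr ⟨t, fun i => le_trans (ht i) (hss i), hxt⟩
  · -- equality of Souslin sets
    apply Set.Subset.antisymm
    · -- hard direction via an ultrafilter
      intro x hx
      simp only [souslinSet, mem_iUnion, mem_iInter] at hx ⊢
      obtain ⟨f, hf⟩ := hx
      have hf' : ∀ k, ∃ t : Fin (k + 1) → ℕ, (∀ i, t i ≤ f i) ∧ x ∈ Bsch A k t := by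
        intro k
        exact mem_Dsch.mp (hf k)
      choose t ht hxt using hf'
      set T : ℕ → ℕ → ℕ := fun k i => if h : i < k + 1 then t k ⟨i, h⟩ else 0 with hT
      have hTle : ∀ k i, T k i ≤ f i := by
        intro k i
        simp only [hT]
        split
        · exact ht k ⟨i, by assumption⟩
        · exact Nat.zero_le _
      let U : Ultrafilter ℕ := Ultrafilter.of Filter.atTop
      have hUat : (U : Filter ℕ) ≤ Filter.atTop := Ultrafilter.of_le _
      have hgex : ∀ i, ∃ v, {k | T k i = v} ∈ U := by
        intro i
        have hcover : (⋃ v ∈ Set.Iic (f i), {k | T k i = v}) ∈ U := by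
          have huniv : (⋃ v ∈ Set.Iic (f i), {k | T k i = v}) = Set.univ := by
            ext k
            simp only [Set.mem_iUnion, Set.mem_setOf_eq, Set.mem_Iic, Set.mem_univ, iff_true]
            exact ⟨T k i, hTle k i, rfl⟩
          rw [huniv]; exact Filter.univ_mem
        obtain ⟨v, _, hv⟩ := (Ultrafilter.finite_biUnion_mem_iff (Set.finite_Iic _)).mp hcover
        exact ⟨v, hv⟩
      choose g hgU using hgex
      refine ⟨g, fun j => ?_⟩
      have hS : ({k | j ≤ k} ∩ ⋂ i ∈ Set.Iic j, {k | T k i = g i}) ∈ U := by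
        apply Filter.inter_mem
        · exact hUat (Filter.mem_atTop j)
        · exact (Filter.biInter_mem (Set.finite_Iic j)).mpr fun i _ => hgU i
      obtain ⟨m, hmj, hmi⟩ := Filter.nonempty_of_mem hS
      rw [Set.mem_iInter₂] at hmi
      have hj' : j < m + 1 := by
        simp only [Set.mem_setOf_eq] at hmj; omega
      have hB := hxt m
      simp only [Bsch, mem_iInter] at hB
      have hmem := hB ⟨j, hj'⟩
      have heq : (fun i : Fin (j + 1) => t m (Fin.castLE hj' i)) = fun i : Fin (j + 1) => g i := by
        funext i
        have hi : (i : ℕ) < m + 1 := by omega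
        have h1 : t m (Fin.castLE hj' i) = T m i := by
          simp only [hT]
          rw [dif_pos hi]
          rfl
        have h2 : T m (i : ℕ) = g (i : ℕ) := hmi (i : ℕ) (by simp; omega)
        rw [h1, h2]
      rw [← heq]
      exact hmem
    · -- easy direction
      intro x hx
      simp only [souslinSet, mem_iUnion, mem_iInter] at hx ⊢
      obtain ⟨f, hf⟩ := hx
      refine ⟨f, fun k => ?_⟩
      refine mem_Dsch.mpr ⟨fun i => f i, fun i => le_refl _, ?_⟩
      simp only [Bsch, mem_iInter]
      intro j
      exact hf j.1
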